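/- Well-definedness of the section: Let i ∈ 𝕊², let f ∈ A_i(𝔹⁴), and let (k,l) ∈ T. Then the functions D₁[f,k,l], D₂[f,k,l], D₃[f,k,l], D₄[f,k,l] : D → ℝ are real-valued, the pairs (D₁[f,k,l], D₂[f,k,l]) and (D₃[f,k,l], D₄[f,k,l]) are pairs of conjugate harmonic functions on D, and each D_m[f,k,l] has finite L²(D) norm; hence S_{k,l}[f] := ((D₁ D₂; D₃ D₄), (k,l)) belongs to HL(D). -/

import Mathlib

noncomputable section

open MeasureTheory Filter

notation "ℍ" => Quaternion ℝ

/-- The set of pure imaginary unit quaternions `𝕊²`. -/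
def Sph2 (i : ℍ) : Prop := i.re = 0 ∧ ‖i‖ = 1

/-- Ordered pairs of orthogonal pure imaginary unit quaternions (the set `T`). -/
def OrthPair (i j : ℍ) : Prop := Sph2 i ∧ Sph2 j ∧ (i * star j).re = 0

/-- The slice complex plane `ℂ(i) = {x + y i}`. -/
def CC (i : ℍ) : Set ℍ := {q | ∃ x y : ℝ, q = (x : ℍ) + y • i}

/-- Slice regularity of `f` on `Ω`: real differentiability together with the
Cauchy–Riemann condition `½(∂/∂x + i ∂/∂y) f = 0` on every slice. -/
def SliceRegularOn (f : ℍ → ℍ) (Ω : Set ℍ) : Prop :=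
  ∀ ⦃i : ℍ⦄, Sph2 i → ∀ x y : ℝ, ((x : ℍ) + y • i) ∈ Ω →
    DifferentiableAt ℝ f ((x : ℍ) + y • i) ∧
    fderiv ℝ f ((x : ℍ) + y • i) 1 + i * fderiv ℝ f ((x : ℍ) + y • i) i = 0

/-- Axially symmetric slice domain. -/
structure AxSymSDomain (Ω : Set ℍ) : Prop where
  isOpen : IsOpen Ω
  isConnected : IsConnected Ω
  real_nonempty : (Ω ∩ Set.range ((↑) : ℝ → ℍ)).Nonempty
  slice_connected : ∀ ⦃i : ℍ⦄, Sph2 i →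
    IsConnected {p : ℝ × ℝ | ((p.1 : ℍ) + p.2 • i) ∈ Ω}
  axial : ∀ (x y : ℝ) ⦃i : ℍ⦄, Sph2 i → ((x : ℍ) + y • i) ∈ Ω →
    ∀ ⦃j : ℍ⦄, Sph2 j → ((x : ℍ) + y • j) ∈ Ω

/-- The slice `Ω ∩ ℂ(i)` as a subset of `ℝ²`. -/
def sliceSet (Ω : Set ℍ) (i : ℍ) : Set (ℝ × ℝ) := {p | ((p.1 : ℍ) + p.2 • i) ∈ Ω}

/-- `‖f‖²_{A_i(Ω)} = ∫_{Ω ∩ ℂ(i)} ‖f‖² dσ_i`. -/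
def bergmanNormSq (Ω : Set ℍ) (i : ℍ) (f : ℍ → ℍ) : ℝ :=
  ∫ p in sliceSet Ω i, ‖f ((p.1 : ℍ) + p.2 • i)‖ ^ 2

/-- The slice regular Bergman norm `‖f‖_{A_i(Ω)}`. -/
def bergmanNorm (Ω : Set ℍ) (i : ℍ) (f : ℍ → ℍ) : ℝ :=
  Real.sqrt (bergmanNormSq Ω i f)

/-- Membership in the slice regular Bergman space `A_i(Ω)`. -/
def MemBergman (Ω : Set ℍ) (i : ℍ) (f : ℍ → ℍ) : Prop :=
  SliceRegularOn f Ω ∧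
  IntegrableOn (fun p : ℝ × ℝ => ‖f ((p.1 : ℍ) + p.2 • i)‖ ^ 2) (sliceSet Ω i)

/-- The quaternionic Bergman inner product `⟨f,g⟩ = ∫ conj(f) g dσ_i`. -/
def bergmanInner (Ω : Set ℍ) (i : ℍ) (f g : ℍ → ℍ) : ℍ :=
  ∫ p in sliceSet Ω i, star (f ((p.1 : ℍ) + p.2 • i)) * g ((p.1 : ℍ) + p.2 • i)

/-- The open unit ball `𝔹⁴ ⊆ ℍ`. -/
def B4 : Set ℍ := {q | ‖q‖ < 1}

/-- The open unit disk `D ⊆ ℝ²`. -/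
def unitDisk : Set (ℝ × ℝ) := {p | p.1 ^ 2 + p.2 ^ 2 < 1}

/-- `‖f‖²_{A_i(𝔹⁴)} = ∫_D ‖f(x + yi)‖² dμ(x,y)`. -/
def bergNormSqB (i : ℍ) (f : ℍ → ℍ) : ℝ :=
  ∫ p in unitDisk, ‖f ((p.1 : ℍ) + p.2 • i)‖ ^ 2

/-- The Bergman norm on `A_i(𝔹⁴)`. -/
def bergNormB (i : ℍ) (f : ℍ → ℍ) : ℝ := Real.sqrt (bergNormSqB i f)

/-- Membership in `A_i(𝔹⁴)`. -/
def MemBergB (i : ℍ) (f : ℍ → ℍ) : Prop :=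
  SliceRegularOn f B4 ∧
  IntegrableOn (fun p : ℝ × ℝ => ‖f ((p.1 : ℍ) + p.2 • i)‖ ^ 2) unitDisk

open Classical in
/-- `I_q`: the imaginary unit direction of `q` (an arbitrary fixed unit when `q` is real). -/
def Imu (q : ℍ) : ℍ := if q.im = 0 then ⟨0, 1, 0, 0⟩ else ‖q.im‖⁻¹ • q.im

/-- The extension operator `P_{k,·}`: for a slice function `g : ℝ² → ℍ` (representing
`x + y k ↦ g(x,y)`), `Pext k g (q) = ½[(1 + I_q k) g(x, −y) + (1 − I_q k) g(x, y)]`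
where `q = x + I_q y`, `y = ‖im q‖ ≥ 0`. -/
def Pext (k : ℍ) (g : ℝ × ℝ → ℍ) (q : ℍ) : ℍ :=
  (2⁻¹ : ℝ) • ((1 + Imu q * k) * g (q.re, -‖q.im‖) + (1 - Imu q * k) * g (q.re, ‖q.im‖))

/-- The slice function `x + y k ↦ a + b k + c l + d kl`. -/
def sliceFun (a b c d : ℝ × ℝ → ℝ) (k l : ℍ) (p : ℝ × ℝ) : ℍ :=
  (a p : ℍ) + b p • k + c p • l + d p • (k * l)

/-- `L²(D)` norm of a real function on the unit disk. -/
def L2D (a : ℝ × ℝ → ℝ) : ℝ := Real.sqrt (∫ p in unitDisk, a p ^ 2)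

/-- Finiteness of the `L²(D)` norm. -/
def MemL2D (a : ℝ × ℝ → ℝ) : Prop := IntegrableOn (fun p => a p ^ 2) unitDisk

/-- Harmonicity on the unit disk: `a` is `C²` and `∂²a/∂x² + ∂²a/∂y² = 0`. -/
def HarmonicOnDisk (a : ℝ × ℝ → ℝ) : Prop :=
  ContDiffOn ℝ 2 a unitDisk ∧ ∀ p ∈ unitDisk,
    fderiv ℝ (fun q => fderiv ℝ a q (1, 0)) p (1, 0)
      + fderiv ℝ (fun q => fderiv ℝ a q (0, 1)) p (0, 1) = 0

/-- `(a,b)` is a pair of conjugate harmonic functions on `D`: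
both harmonic and satisfying the Cauchy–Riemann equations. -/
def ConjHarmPair (a b : ℝ × ℝ → ℝ) : Prop :=
  HarmonicOnDisk a ∧ HarmonicOnDisk b ∧
  ∀ p ∈ unitDisk,
    fderiv ℝ a p (1, 0) = fderiv ℝ b p (0, 1) ∧
    fderiv ℝ a p (0, 1) = -fderiv ℝ b p (1, 0)

/-- `(a,b) ∈ HL²(D)`. -/
def HLpair (a b : ℝ × ℝ → ℝ) : Prop := ConjHarmPair a b ∧ MemL2D a ∧ MemL2D b

/-- Raw data of an element of `HL(D)`: a 2×2 matrix `(a b; c d)` of real functions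
on the disk together with a pair `(k,l)` of quaternions. -/
structure HLElem where
  a : ℝ × ℝ → ℝ
  b : ℝ × ℝ → ℝ
  c : ℝ × ℝ → ℝ
  d : ℝ × ℝ → ℝ
  k : ℍ
  l : ℍ

/-- Membership in `HL(D)`: `(a,b),(c,d) ∈ HL²(D)` and `(k,l) ∈ T`. -/
def HLElem.mem (A : HLElem) : Prop := HLpair A.a A.b ∧ HLpair A.c A.d ∧ OrthPair A.k A.l

/-- The bundle projection `P_{𝔹⁴}((a b; c d),(k,l)) = P_{k,l}[a + bk + cl + dkl]`. -/
def HLElem.proj (A : HLElem) : ℍ → ℍ := Pext A.k (sliceFun A.a A.b A.c A.d A.k A.l)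

/-- The metric of `HL(D)`. -/
def HLdist (A B : HLElem) : ℝ :=
  L2D (A.a - B.a) + L2D (A.b - B.b) + L2D (A.c - B.c) + L2D (A.d - B.d)
    + Real.sqrt (‖A.k - B.k‖ ^ 2 + ‖A.l - B.l‖ ^ 2)

/-- `Q_{k,l}[f] : (x,y) ↦ f(x + y k)`, the restriction of `f` to the slice `ℂ(k)`. -/
def Qsl (f : ℍ → ℍ) (k : ℍ) (p : ℝ × ℝ) : ℍ := f ((p.1 : ℍ) + p.2 • k)

/-- `D₁[f,k,l] = (Q[f] + conj(Q[f]))/2 = Re (Q[f])`. -/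
def Dc1 (f : ℍ → ℍ) (k _l : ℍ) (p : ℝ × ℝ) : ℝ := (Qsl f k p).re

/-- `D₂[f,k,l] = −(Q[f]·k + conj(Q[f]·k))/2 = −Re (Q[f]·k)`. -/
def Dc2 (f : ℍ → ℍ) (k _l : ℍ) (p : ℝ × ℝ) : ℝ := -(Qsl f k p * k).re

/-- `D₃[f,k,l] = −(Q[f]·l + conj(Q[f]·l))/2 = −Re (Q[f]·l)`. -/
def Dc3 (f : ℍ → ℍ) (k l : ℍ) (p : ℝ × ℝ) : ℝ := -(Qsl f k p * l).re

/-- `D₄[f,k,l] = (Q[f]·lk + conj(Q[f]·lk))/2 = Re (Q[f]·(lk))`. -/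
def Dc4 (f : ℍ → ℍ) (k l : ℍ) (p : ℝ × ℝ) : ℝ := (Qsl f k p * (l * k)).re

/-- The section map `S_{k,l}[f] = ((D₁ D₂; D₃ D₄), (k,l))`. -/
def Smap (f : ℍ → ℍ) (k l : ℍ) : HLElem :=
  ⟨Dc1 f k l, Dc2 f k l, Dc3 f k l, Dc4 f k l, k, l⟩

/-- The metric `ρ_i` on `A_i(𝔹⁴) × T`. -/
def rhoA (i : ℍ) (f : ℍ → ℍ) (k l : ℍ) (g : ℍ → ℍ) (m n : ℍ) : ℝ :=
  bergNormB i (f - g) + Real.sqrt (‖k - m‖ ^ 2 + ‖l - n‖ ^ 2)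

/-! ### Auxiliary lemmas -/

section Aux

lemma re_mul_comm (p q : ℍ) : (p*q).re = (q*p).re := by
  simp only [Quaternion.re_mul]; ring

lemma sph2_star {k : ℍ} (hk : Sph2 k) : star k = -k := by
  ext <;> simp [hk.1]

lemma sph2_mul_self {k : ℍ} (hk : Sph2 k) : k * k = -1 := by
  have h1 : Quaternion.normSq k = 1 := by
    rw [Quaternion.normSq_eq_norm_mul_self, hk.2, one_mul]
  have := Quaternion.star_mul_self k
  rw [sph2_star hk, h1] at this
  have h2 : -(k*k) = 1 := by rw [← neg_mul]; exact_mod_cast this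
  rw [← h2, neg_neg]

lemma re_conj_k {k : ℍ} (hk : k * k = -1) (X : ℍ) : (k * (X * k)).re = -X.re := by
  rw [re_mul_comm, mul_assoc, hk]; simp

lemma norm_slice {j : ℍ} (hj : Sph2 j) (x y : ℝ) : ‖(x:ℍ) + y • j‖^2 = x^2 + y^2 := by
  have h1 : Quaternion.normSq j = 1 := by
    rw [Quaternion.normSq_eq_norm_mul_self, hj.2, one_mul]
  have h2 : j.imI^2 + j.imJ^2 + j.imK^2 = 1 := by
    have := Quaternion.normSq_def' j
    rw [h1, hj.1] at this; nlinarith [this]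
  have : ‖(x:ℍ) + y • j‖^2 = Quaternion.normSq ((x:ℍ) + y • j) := by
    rw [Quaternion.normSq_eq_norm_mul_self]; ring
  rw [this, Quaternion.normSq_def']
  simp [hj.1]
  ring_nf
  nlinarith [h2]

lemma slice_mem_B4 {j : ℍ} (hj : Sph2 j) {p : ℝ × ℝ} (hp : p ∈ unitDisk) :
    ((p.1:ℍ) + p.2 • j) ∈ B4 := by
  show ‖(p.1:ℍ) + p.2 • j‖ < 1
  have := norm_slice hj p.1 p.2
  have hn : ‖(p.1:ℍ) + p.2 • j‖^2 < 1 := by rw [this]; exact hp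
  nlinarith [norm_nonneg ((p.1:ℍ) + p.2 • j)]

lemma isOpen_unitDisk : IsOpen unitDisk :=
  (continuous_fst.pow 2 |>.add (continuous_snd.pow 2)).isOpen_preimage _ isOpen_Iio

lemma abs_re_le_norm' (q : ℍ) : |q.re| ≤ ‖q‖ := by
  have h : Quaternion.normSq q = ‖q‖ * ‖q‖ := Quaternion.normSq_eq_norm_mul_self q
  have := Quaternion.normSq_def' q
  nlinarith [norm_nonneg q, abs_nonneg q.re, sq_abs q.re]

/-! ### Continuous linear maps -/

def sliceCLM (j : ℍ) : ℝ × ℝ →L[ℝ] ℍ :=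
  LinearMap.toContinuousLinearMap
  { toFun := fun p => (p.1:ℍ) + p.2 • j
    map_add' := by intro p q; simp only [Prod.fst_add, Prod.snd_add]; push_cast; module
    map_smul' := by
      intro c p
      simp only [Prod.smul_fst, Prod.smul_snd, smul_eq_mul, RingHom.id_apply, smul_add, smul_smul]
      rw [Quaternion.smul_coe] }

def cCLM (w k : ℍ) : ℍ →L[ℝ] ℂ :=
  LinearMap.toContinuousLinearMap
  { toFun := fun q => ⟨(q*w).re, -(q*(w*k)).re⟩
    map_add' := by intro p q; apply Complex.ext <;> simp [add_mul] <;> ring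
    map_smul' := by intro c p; apply Complex.ext <;> simp [smul_mul_assoc] <;> ring }

def rhoCLM : ℂ →L[ℝ] ℝ × ℝ :=
  LinearMap.toContinuousLinearMap
  { toFun := fun z => (z.re, z.im)
    map_add' := by intro p q; simp
    map_smul' := by intro c p; simp }

def iotaCLM : ℝ × ℝ →L[ℝ] ℂ :=
  LinearMap.toContinuousLinearMap
  { toFun := fun p => ⟨p.1, p.2⟩
    map_add' := by intro p q; apply Complex.ext <;> simp
    map_smul' := by intro c p; apply Complex.ext <;> simp }

def reflCLM : ℝ × ℝ →L[ℝ] ℝ × ℝ :=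
  LinearMap.toContinuousLinearMap
  { toFun := fun p => (p.1, -p.2)
    map_add' := by intro p q; simp [Prod.ext_iff]; ring
    map_smul' := by intro c p; simp [Prod.ext_iff] }

def mulL (c : ℍ) : ℍ →L[ℝ] ℍ :=
  LinearMap.toContinuousLinearMap
  { toFun := fun q => c * q
    map_add' := by intro p q; simp [mul_add]
    map_smul' := by intro r p; simp [mul_smul_comm] }

def reMulCLM (w : ℍ) : ℍ →L[ℝ] ℝ :=
  LinearMap.toContinuousLinearMap
  { toFun := fun q => (q*w).re
    map_add' := by intro p q; simp [add_mul]
    map_smul' := by intro c p; simp [smul_mul_assoc] }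

/-! ### Holomorphy on slices -/

def Hol (k : ℍ) (u : ℝ × ℝ → ℍ) : Prop :=
  ∀ p ∈ unitDisk, DifferentiableAt ℝ u p ∧
    fderiv ℝ u p (0,1) = k * fderiv ℝ u p (1,0)

lemma hol_slice {f : ℍ → ℍ} (hf : SliceRegularOn f B4) {j : ℍ} (hj : Sph2 j) :
    Hol j (fun p : ℝ × ℝ => f ((p.1:ℍ) + p.2 • j)) := by
  intro p hp
  obtain ⟨hdf, hcr⟩ := hf hj p.1 p.2 (slice_mem_B4 hj hp)
  set q := (p.1:ℍ) + p.2 • j with hq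
  have hE : HasFDerivAt (fun p : ℝ × ℝ => f ((p.1:ℍ) + p.2 • j))
      ((fderiv ℝ f q).comp (sliceCLM j)) p :=
    (hdf.hasFDerivAt).comp p ((sliceCLM j).hasFDerivAt)
  have hfd := hE.fderiv
  have e1 : sliceCLM j ((1:ℝ),(0:ℝ)) = 1 := by
    show ((1:ℝ):ℍ) + (0:ℝ) • j = 1; simp
  have e2 : sliceCLM j ((0:ℝ),(1:ℝ)) = j := by
    show ((0:ℝ):ℍ) + (1:ℝ) • j = j; simp
  refine ⟨hE.differentiableAt, ?_⟩
  rw [hfd]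
  simp only [ContinuousLinearMap.comp_apply, e1, e2]
  have hjj := sph2_mul_self hj
  have h2 : j * (fderiv ℝ f q 1 + j * fderiv ℝ f q j) = 0 := by rw [hcr, mul_zero]
  rw [mul_add, ← mul_assoc, hjj, neg_one_mul] at h2
  have h3 : j * fderiv ℝ f q 1 - fderiv ℝ f q j = 0 := by rw [sub_eq_add_neg]; exact h2
  exact (sub_eq_zero.mp h3).symm

/-! ### The associated holomorphic complex function -/

def FW (k w : ℍ) (u : ℝ × ℝ → ℍ) (z : ℂ) : ℂ := cCLM w k (u (rhoCLM z))

lemma mem_unitDisk_of_ball {z : ℂ} (hz : z ∈ Metric.ball (0:ℂ) 1) :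
    ((z.re, z.im) : ℝ × ℝ) ∈ unitDisk := by
  rw [Metric.mem_ball, dist_zero_right] at hz
  have h2 : ‖z‖^2 < 1 := by nlinarith [norm_nonneg z]
  rw [Complex.sq_norm, Complex.normSq_apply] at h2
  show z.re^2 + z.im^2 < 1
  nlinarith [h2]

lemma iota_mem_ball {p : ℝ × ℝ} (hp : p ∈ unitDisk) : iotaCLM p ∈ Metric.ball (0:ℂ) 1 := by
  rw [Metric.mem_ball, dist_zero_right]
  have h2 : ‖iotaCLM p‖^2 = p.1^2 + p.2^2 := by
    rw [Complex.sq_norm, Complex.normSq_apply]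
    show p.1 * p.1 + p.2 * p.2 = _
    ring
  have hp' : p.1^2 + p.2^2 < 1 := hp
  nlinarith [norm_nonneg (iotaCLM p)]

lemma FW_analytic {k : ℍ} (hk : k * k = -1) (w : ℍ) {u : ℝ × ℝ → ℍ} (hu : Hol k u) :
    AnalyticOnNhd ℂ (FW k w u) (Metric.ball (0:ℂ) 1) := by
  apply DifferentiableOn.analyticOnNhd _ Metric.isOpen_ball
  intro z hz
  apply DifferentiableAt.differentiableWithinAt
  set p : ℝ × ℝ := (z.re, z.im) with hpdef
  have hp : p ∈ unitDisk := mem_unitDisk_of_ball hz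
  obtain ⟨hdu, hcru⟩ := hu p hp
  set A := fderiv ℝ u p (1,0) with hA
  set c : ℂ := ⟨(A*w).re, -(A*(w*k)).re⟩ with hc
  have h1 : HasFDerivAt (FW k w u)
      (((cCLM w k).comp (fderiv ℝ u p)).comp rhoCLM) z :=
    (show HasFDerivAt ((⇑(cCLM w k) ∘ u) ∘ ⇑rhoCLM) (((cCLM w k).comp (fderiv ℝ u p)).comp rhoCLM) z from
      ((cCLM w k).hasFDerivAt.comp _ hdu.hasFDerivAt).comp z rhoCLM.hasFDerivAt)
  have key : ∀ v : ℂ, (((cCLM w k).comp (fderiv ℝ u p)).comp rhoCLM) v = v * c := by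
    intro v
    have hv : (v.re, v.im) = v.re • ((1:ℝ),(0:ℝ)) + v.im • ((0:ℝ),(1:ℝ)) := by
      simp [Prod.ext_iff]
    have : (((cCLM w k).comp (fderiv ℝ u p)).comp rhoCLM) v
        = cCLM w k (fderiv ℝ u p (v.re, v.im)) := rfl
    rw [this, hv, map_add, _root_.map_smul, _root_.map_smul, hcru, map_add,
      _root_.map_smul, _root_.map_smul]
    have e1 : cCLM w k A = c := rfl
    have e2 : cCLM w k (k * A) = Complex.I * c := by
      have r1 : (k * A * w).re = (A * (w * k)).re := by
        rw [mul_assoc, re_mul_comm, mul_assoc]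
      have r2 : (k * A * (w * k)).re = -(A * w).re := by
        have h3 : k * A * (w * k) = k * ((A * w) * k) := by
          rw [mul_assoc, mul_assoc A w k]
        rw [h3, re_conj_k hk]
      have lhs1 : (cCLM w k (k * A)).re = (k * A * w).re := rfl
      have lhs2 : (cCLM w k (k * A)).im = -(k * A * (w * k)).re := rfl
      apply Complex.ext
      · rw [lhs1, r1, Complex.mul_re]; simp [hc]
      · rw [lhs2, r2, Complex.mul_im]; simp [hc]
    rw [e1, e2]
    calc v.re • c + v.im • (Complex.I * c)
        = ((v.re : ℂ) + (v.im : ℂ) * Complex.I) * c := by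
          rw [Complex.real_smul, Complex.real_smul]; ring
      _ = v * c := by rw [Complex.re_add_im]
  have h2 : HasFDerivAt (FW k w u) ((1 : ℂ →L[ℂ] ℂ).smulRight c) z := by
    rw [hasFDerivAt_iff_isLittleO_nhds_zero] at h1 ⊢
    have : ∀ h : ℂ, ((1 : ℂ →L[ℂ] ℂ).smulRight c) h
        = (((cCLM w k).comp (fderiv ℝ u p)).comp rhoCLM) h := by
      intro h; rw [key]; simp [smul_eq_mul]
    simpa only [this] using h1
  exact h2.differentiableAt

lemma comp_contDiffOn {k : ℍ} (hk : k*k = -1) (w : ℍ) {u : ℝ × ℝ → ℍ} (hu : Hol k u) :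
    ContDiffOn ℝ 2 (fun p => (u p * w).re) unitDisk ∧
    ContDiffOn ℝ 2 (fun p => -(u p * (w*k)).re) unitDisk := by
  have hA := FW_analytic hk w hu
  have hC : ContDiffOn ℂ 2 (FW k w u) (Metric.ball (0:ℂ) 1) :=
    hA.contDiffOn Metric.isOpen_ball.uniqueDiffOn
  have hCR : ContDiffOn ℝ 2 (FW k w u) (Metric.ball (0:ℂ) 1) := hC.restrict_scalars ℝ
  have hmaps : Set.MapsTo (fun p : ℝ × ℝ => iotaCLM p) unitDisk (Metric.ball (0:ℂ) 1) :=
    fun p hp => iota_mem_ball hp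
  have hcomp : ContDiffOn ℝ 2 (fun p : ℝ × ℝ => FW k w u (iotaCLM p)) unitDisk :=
    hCR.comp (iotaCLM.contDiff.contDiffOn) hmaps
  constructor
  · exact Complex.reCLM.contDiff.comp_contDiffOn hcomp
  · exact Complex.imCLM.contDiff.comp_contDiffOn hcomp

lemma fderiv_reMul {u : ℝ × ℝ → ℍ} {p : ℝ × ℝ} (hd : DifferentiableAt ℝ u p) (w : ℍ)
    (v : ℝ × ℝ) :
    fderiv ℝ (fun p => (u p * w).re) p v = (fderiv ℝ u p v * w).re := by
  have : HasFDerivAt (fun p => (u p * w).re) ((reMulCLM w).comp (fderiv ℝ u p)) p :=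
    (reMulCLM w).hasFDerivAt.comp p hd.hasFDerivAt
  rw [this.fderiv]; rfl

lemma fderiv_reMul_neg {u : ℝ × ℝ → ℍ} {p : ℝ × ℝ} (hd : DifferentiableAt ℝ u p) (w : ℍ)
    (v : ℝ × ℝ) :
    fderiv ℝ (fun p => -(u p * w).re) p v = -(fderiv ℝ u p v * w).re := by
  have : HasFDerivAt (fun p => -(u p * w).re) ((-(reMulCLM w)).comp (fderiv ℝ u p)) p :=
    (-(reMulCLM w)).hasFDerivAt.comp p hd.hasFDerivAt
  rw [this.fderiv]; rfl

lemma cr_pair {k : ℍ} (hk : k*k = -1) (w : ℍ) {u : ℝ × ℝ → ℍ} (hu : Hol k u) :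
    ∀ p ∈ unitDisk,
      fderiv ℝ (fun p => (u p * w).re) p (1,0)
        = fderiv ℝ (fun p => -(u p * (w*k)).re) p (0,1) ∧
      fderiv ℝ (fun p => (u p * w).re) p (0,1)
        = -(fderiv ℝ (fun p => -(u p * (w*k)).re) p (1,0)) := by
  intro p hp
  obtain ⟨hd, hcr⟩ := hu p hp
  set A := fderiv ℝ u p (1,0) with hA
  rw [fderiv_reMul hd, fderiv_reMul hd, fderiv_reMul_neg hd, fderiv_reMul_neg hd, hcr]
  constructor
  · have h3 : k * A * (w * k) = k * ((A * w) * k) := by rw [mul_assoc, mul_assoc A w k]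
    rw [h3, re_conj_k hk, neg_neg]
  · rw [neg_neg, mul_assoc, re_mul_comm, mul_assoc]

lemma harmonic_of_cr {a b : ℝ × ℝ → ℝ}
    (ha : ContDiffOn ℝ 2 a unitDisk) (hb : ContDiffOn ℝ 2 b unitDisk)
    (h1 : ∀ p ∈ unitDisk, fderiv ℝ a p (1,0) = fderiv ℝ b p (0,1))
    (h2 : ∀ p ∈ unitDisk, fderiv ℝ a p (0,1) = -(fderiv ℝ b p (1,0))) :
    HarmonicOnDisk a := by
  refine ⟨ha, fun p hp => ?_⟩
  have hnb : unitDisk ∈ nhds p := isOpen_unitDisk.mem_nhds hp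
  have hb2 : ContDiffAt ℝ 2 b p := hb.contDiffAt hnb
  have hbd : DifferentiableAt ℝ (fderiv ℝ b) p := by
    have : ContDiffAt ℝ 1 (fderiv ℝ b) p := hb2.fderiv_right (by norm_num)
    exact this.differentiableAt (by norm_num)
  have hsym := hb2.isSymmSndFDerivAt (by simp)
  have e1 : fderiv ℝ (fun q => fderiv ℝ a q (1,0)) p
      = fderiv ℝ (fun q => fderiv ℝ b q (0,1)) p := by
    apply Filter.EventuallyEq.fderiv_eq
    filter_upwards [hnb] with q hq using h1 q hq
  have e2 : fderiv ℝ (fun q => fderiv ℝ a q (0,1)) p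
      = fderiv ℝ (fun q => -(fderiv ℝ b q (1,0))) p := by
    apply Filter.EventuallyEq.fderiv_eq
    filter_upwards [hnb] with q hq using h2 q hq
  have e3 : ∀ v w : ℝ × ℝ, fderiv ℝ (fun q => fderiv ℝ b q v) p w
      = fderiv ℝ (fderiv ℝ b) p w v := by
    intro v w
    rw [fderiv_clm_apply hbd (differentiableAt_const v)]
    simp
  have e4 : fderiv ℝ (fun q => -(fderiv ℝ b q (1,0))) p (0,1)
      = -(fderiv ℝ (fun q => fderiv ℝ b q (1,0)) p (0,1)) := by
    rw [fderiv_fun_neg]; simp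
  rw [e1, e2, e4, e3, e3, hsym (0,1) (1,0)]
  ring

/-! ### The representation combination -/

lemma refl_mem {p : ℝ × ℝ} (hp : p ∈ unitDisk) : ((p.1, -p.2) : ℝ × ℝ) ∈ unitDisk := by
  have : p.1^2 + p.2^2 < 1 := hp
  show p.1^2 + (-p.2)^2 < 1
  nlinarith

lemma hol_sub {k : ℍ} {u v : ℝ × ℝ → ℍ} (hu : Hol k u) (hv : Hol k v) :
    Hol k (fun p => u p - v p) := by
  intro p hp
  obtain ⟨hdu, hcu⟩ := hu p hp
  obtain ⟨hdv, hcv⟩ := hv p hp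
  refine ⟨hdu.sub hdv, ?_⟩
  rw [fderiv_fun_sub hdu hdv]
  simp only [ContinuousLinearMap.sub_apply, hcu, hcv, mul_sub]

lemma quat_id {i k : ℍ} (A B : ℍ) (hi2 : i*i = -1) (hk2 : k*k = -1) :
    (1 - k*i) * (i*A) + (1 + k*i) * (-(i*B)) = k * ((1 - k*i)*A + (1 + k*i)*B) := by
  have hii' : ∀ X : ℍ, i * (i * X) = -X := fun X => by rw [← mul_assoc, hi2, neg_one_mul]
  have hki' : ∀ X : ℍ, k * (k * X) = -X := fun X => by rw [← mul_assoc, hk2, neg_one_mul]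
  simp only [sub_mul, add_mul, one_mul, mul_neg, neg_mul, mul_add, mul_sub, mul_assoc,
    hii', hki', neg_neg]
  abel

lemma hol_w {i k : ℍ} (hi2 : i*i = -1) (hk2 : k*k = -1) {gi : ℝ × ℝ → ℍ} (hgi : Hol i gi) :
    Hol k (fun p => (2⁻¹:ℝ) • ((1 - k*i) * gi p + (1 + k*i) * gi (p.1, -p.2))) := by
  intro p hp
  have hp2 : ((p.1, -p.2) : ℝ × ℝ) ∈ unitDisk := refl_mem hp
  obtain ⟨hdA, hcrA⟩ := hgi p hp
  obtain ⟨hdB, hcrB⟩ := hgi (p.1, -p.2) hp2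
  set A := fderiv ℝ gi p (1,0) with hA
  set B := fderiv ℝ gi (p.1, -p.2) (1,0) with hB
  have hgr : HasFDerivAt (fun p : ℝ × ℝ => gi (p.1, -p.2))
      ((fderiv ℝ gi (p.1, -p.2)).comp reflCLM) p :=
    hdB.hasFDerivAt.comp p reflCLM.hasFDerivAt
  have hT : HasFDerivAt
      (fun p : ℝ × ℝ => (2⁻¹:ℝ) • ((1 - k*i) * gi p + (1 + k*i) * gi (p.1, -p.2)))
      ((2⁻¹:ℝ) • ((mulL (1 - k*i)).comp (fderiv ℝ gi p)
        + (mulL (1 + k*i)).comp ((fderiv ℝ gi (p.1, -p.2)).comp reflCLM))) p := by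
    apply HasFDerivAt.fun_const_smul
    exact (((mulL (1 - k*i)).hasFDerivAt.comp p hdA.hasFDerivAt).add
      ((mulL (1 + k*i)).hasFDerivAt.comp p hgr))
  refine ⟨hT.differentiableAt, ?_⟩
  rw [hT.fderiv]
  have er1 : reflCLM ((1:ℝ),(0:ℝ)) = ((1:ℝ),(0:ℝ)) := by
    show ((1:ℝ), -(0:ℝ)) = ((1:ℝ),(0:ℝ)); norm_num
  have er2 : reflCLM ((0:ℝ),(1:ℝ)) = -((0:ℝ),(1:ℝ)) := by
    show ((0:ℝ), -(1:ℝ)) = _; rw [Prod.neg_mk]; norm_num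
  have happ : ∀ v : ℝ × ℝ,
      ((2⁻¹:ℝ) • ((mulL (1 - k*i)).comp (fderiv ℝ gi p)
        + (mulL (1 + k*i)).comp ((fderiv ℝ gi (p.1, -p.2)).comp reflCLM))) v
      = (2⁻¹:ℝ) • ((1 - k*i) * fderiv ℝ gi p v
          + (1 + k*i) * fderiv ℝ gi (p.1, -p.2) (reflCLM v)) := fun v => rfl
  rw [happ, happ, er1, er2, map_neg, hcrA, hcrB, mul_smul_comm]
  congr 1
  exact quat_id A B hi2 hk2

lemma FW_vanish {k : ℍ} (hk : k*k = -1) (w : ℍ) {h : ℝ × ℝ → ℍ} (hh : Hol k h)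
    (h0 : ∀ x : ℝ, h (x, 0) = 0) :
    ∀ p ∈ unitDisk, (h p * w).re = 0 ∧ (h p * (w*k)).re = 0 := by
  have hA := FW_analytic hk w hh
  have hEq : Set.EqOn (FW k w h) 0 (Metric.ball (0:ℂ) 1) := by
    apply hA.eqOn_zero_of_preconnected_of_frequently_eq_zero
      ((convex_ball (0:ℂ) 1).isPreconnected) (Metric.mem_ball_self one_pos)
    · have htend : Tendsto (fun n : ℕ => (Complex.ofReal (((n:ℝ)+2)⁻¹))) atTop
          (nhdsWithin (0:ℂ) {(0:ℂ)}ᶜ) := by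
        apply tendsto_nhdsWithin_of_tendsto_nhds_of_eventually_within
        · have : Tendsto (fun n : ℕ => ((n:ℝ)+2)⁻¹) atTop (nhds 0) := by
            apply tendsto_inv_atTop_zero.comp
            exact tendsto_atTop_add_const_right _ 2 tendsto_natCast_atTop_atTop
          have := (Complex.continuous_ofReal.tendsto 0).comp this
          simpa [Function.comp_def] using this
        · filter_upwards with n
          simp only [Set.mem_compl_iff, Set.mem_singleton_iff]
          intro hcon
          have : ((n:ℝ)+2)⁻¹ = 0 := by exact_mod_cast hcon
          have : (0:ℝ) < ((n:ℝ)+2)⁻¹ := by positivity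
          simp_all
      apply htend.frequently
      apply Frequently.of_forall
      intro n
      show FW k w h (Complex.ofReal (((n:ℝ)+2)⁻¹)) = 0
      have hz : rhoCLM (Complex.ofReal (((n:ℝ)+2)⁻¹)) = ((((n:ℝ)+2)⁻¹ : ℝ), (0:ℝ)) := by
        show ((((((n:ℝ)+2)⁻¹:ℝ):ℂ)).re, ((((((n:ℝ)+2)⁻¹:ℝ):ℂ)).im)) = _
        rw [Complex.ofReal_re, Complex.ofReal_im]
      have : FW k w h (Complex.ofReal (((n:ℝ)+2)⁻¹))
          = cCLM w k (h ((((n:ℝ)+2)⁻¹ : ℝ), (0:ℝ))) := by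
        show cCLM w k (h (rhoCLM (Complex.ofReal (((n:ℝ)+2)⁻¹)))) = _
        rw [hz]
      rw [this, h0, map_zero]
  intro p hp
  have := hEq (iota_mem_ball hp)
  have hre : (FW k w h (iotaCLM p)).re = 0 := by rw [this]; rfl
  have him : (FW k w h (iotaCLM p)).im = 0 := by rw [this]; rfl
  constructor
  · exact hre
  · have : (FW k w h (iotaCLM p)).im = -(h p * (w*k)).re := rfl
    rw [this] at him; linarith

/-! ### Integrability -/

lemma refl_integrableOn {F : ℝ × ℝ → ℝ} (hF : IntegrableOn (fun p => F p ^ 2) unitDisk) :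
    IntegrableOn (fun p => F (p.1, -p.2) ^ 2) unitDisk := by
  have mp : MeasurePreserving (fun p : ℝ × ℝ => (p.1, -p.2)) volume volume :=
    (MeasurePreserving.id volume).prod (Measure.measurePreserving_neg volume)
  have emb : MeasurableEmbedding (fun p : ℝ × ℝ => (p.1, -p.2)) :=
    ((MeasurableEquiv.refl ℝ).prodCongr (MeasurableEquiv.neg ℝ)).measurableEmbedding
  have hpre : (fun p : ℝ × ℝ => (p.1, -p.2)) ⁻¹' unitDisk = unitDisk := by
    ext p
    simp only [unitDisk, Set.mem_preimage, Set.mem_setOf_eq, neg_sq]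
  have := (mp.integrableOn_comp_preimage emb (f := fun p => F p ^ 2) (s := unitDisk)).mpr hF
  rwa [hpre] at this

lemma memL2D_of_bound {d : ℝ × ℝ → ℝ} (hc : ContinuousOn d unitDisk)
    {F : ℝ × ℝ → ℝ} (hF : IntegrableOn (fun p => F p ^ 2) unitDisk)
    (hb : ∀ p ∈ unitDisk, |d p| ≤ |F p| + |F (p.1, -p.2)|) :
    IntegrableOn (fun p => d p ^ 2) unitDisk := by
  have hFr := refl_integrableOn hF
  have hm : IntegrableOn (fun p => 2 * F p ^ 2 + 2 * F (p.1, -p.2) ^ 2) unitDisk :=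
    (hF.const_mul 2).add (hFr.const_mul 2)
  apply hm.mono'
  · exact ((hc.pow 2).aestronglyMeasurable isOpen_unitDisk.measurableSet)
  · rw [ae_restrict_iff' isOpen_unitDisk.measurableSet]
    apply ae_of_all
    intro p hp
    have := hb p hp
    have h1 : ‖d p ^ 2‖ = d p ^ 2 := by rw [Real.norm_eq_abs, abs_of_nonneg (sq_nonneg _)]
    rw [h1]
    have e1 : d p ^ 2 = |d p| ^ 2 := (sq_abs _).symm
    have e2 : F p ^ 2 = |F p| ^ 2 := (sq_abs _).symm
    have e3 : F (p.1, -p.2) ^ 2 = |F (p.1, -p.2)| ^ 2 := (sq_abs _).symm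
    rw [e1, e2, e3]
    nlinarith [mul_self_le_mul_self (abs_nonneg (d p)) this,
      sq_nonneg (|F p| - |F (p.1, -p.2)|), abs_nonneg (d p), abs_nonneg (F p),
      abs_nonneg (F (p.1, -p.2))]

/-! ### The main pair lemma -/

lemma pair_hl {i k : ℍ} (hi : Sph2 i) (hk : Sph2 k) {f : ℍ → ℍ} (hf : MemBergB i f)
    (w : ℍ) (hw : ‖w‖ = 1) :
    HLpair (fun p => (f ((p.1:ℍ) + p.2 • k) * w).re)
           (fun p => -(f ((p.1:ℍ) + p.2 • k) * (w*k)).re) := by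
  have hk2 := sph2_mul_self hk
  have hi2 := sph2_mul_self hi
  set g : ℝ × ℝ → ℍ := fun p => f ((p.1:ℍ) + p.2 • k) with hgdef
  set gi : ℝ × ℝ → ℍ := fun p => f ((p.1:ℍ) + p.2 • i) with hgidef
  have hg : Hol k g := hol_slice hf.1 hk
  have hgi : Hol i gi := hol_slice hf.1 hi
  set W : ℝ × ℝ → ℍ :=
    fun p => (2⁻¹:ℝ) • ((1 - k*i) * gi p + (1 + k*i) * gi (p.1, -p.2)) with hWdef
  have hW : Hol k W := hol_w hi2 hk2 hgi
  have hh : Hol k (fun p => g p - W p) := hol_sub hg hW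
  have h0 : ∀ x : ℝ, g (x, 0) - W (x, 0) = 0 := by
    intro x
    have hgx : g (x, 0) = f x := by
      show f (((x:ℝ):ℍ) + (0:ℝ) • k) = f x; norm_num
    have hgix : gi (x, 0) = f x := by
      show f (((x:ℝ):ℍ) + (0:ℝ) • i) = f x; norm_num
    have hWx : W (x, 0) = f x := by
      show (2⁻¹:ℝ) • ((1 - k*i) * gi (x, 0) + (1 + k*i) * gi (x, -0)) = f x
      rw [neg_zero, hgix]
      have : (1 - k*i) * f x + (1 + k*i) * f x = (2:ℝ) • f x := by
        simp only [sub_mul, add_mul, one_mul]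
        rw [two_smul]
        abel
      rw [this, smul_smul]
      norm_num
    rw [hgx, hWx, sub_self]
  have hvan := FW_vanish hk2 w hh h0
  have hWb : ∀ p : ℝ × ℝ, ‖W p‖ ≤ ‖gi p‖ + ‖gi (p.1, -p.2)‖ := by
    intro p
    have hn1 : ‖(1:ℍ) - k*i‖ ≤ 2 := by
      calc ‖(1:ℍ) - k*i‖ ≤ ‖(1:ℍ)‖ + ‖k*i‖ := norm_sub_le _ _
        _ = 2 := by rw [norm_one, norm_mul, hk.2, hi.2]; norm_num
    have hn2 : ‖(1:ℍ) + k*i‖ ≤ 2 := by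
      calc ‖(1:ℍ) + k*i‖ ≤ ‖(1:ℍ)‖ + ‖k*i‖ := norm_add_le _ _
        _ = 2 := by rw [norm_one, norm_mul, hk.2, hi.2]; norm_num
    have h1 : ‖(1 - k*i) * gi p‖ ≤ 2 * ‖gi p‖ := by
      rw [norm_mul]
      exact mul_le_mul_of_nonneg_right hn1 (norm_nonneg _)
    have h2 : ‖(1 + k*i) * gi (p.1, -p.2)‖ ≤ 2 * ‖gi (p.1, -p.2)‖ := by
      rw [norm_mul]
      exact mul_le_mul_of_nonneg_right hn2 (norm_nonneg _)
    have : ‖W p‖ = 2⁻¹ * ‖(1 - k*i) * gi p + (1 + k*i) * gi (p.1, -p.2)‖ := by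
      show ‖(2⁻¹:ℝ) • ((1 - k*i) * gi p + (1 + k*i) * gi (p.1, -p.2))‖ = _
      rw [norm_smul, Real.norm_eq_abs]
      norm_num
    rw [this]
    have := norm_add_le ((1 - k*i) * gi p) ((1 + k*i) * gi (p.1, -p.2))
    nlinarith [norm_nonneg (gi p), norm_nonneg (gi (p.1, -p.2))]
  have hsm := comp_contDiffOn hk2 w hg
  have hcr := cr_pair hk2 w hg
  have hgW : ∀ p ∈ unitDisk, (g p * w).re = (W p * w).re
      ∧ (g p * (w*k)).re = (W p * (w*k)).re := by
    intro p hp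
    obtain ⟨hv1, hv2⟩ := hvan p hp
    constructor
    · have : (g p * w).re = ((g p - W p) * w).re + (W p * w).re := by
        rw [sub_mul]
        simp [sub_add_cancel]
      rw [this, hv1, zero_add]
    · have : (g p * (w*k)).re = ((g p - W p) * (w*k)).re + (W p * (w*k)).re := by
        rw [sub_mul]
        simp [sub_add_cancel]
      rw [this, hv2, zero_add]
  refine ⟨⟨?_, ?_, fun p hp => hcr p hp⟩, ?_, ?_⟩
  · exact harmonic_of_cr hsm.1 hsm.2 (fun p hp => (hcr p hp).1) (fun p hp => (hcr p hp).2)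
  · apply harmonic_of_cr hsm.2 hsm.1.neg
    · intro p hp
      have hcr2 := (hcr p hp).2
      have hn : fderiv ℝ (fun p => -((g p * w).re)) p ((0:ℝ),(1:ℝ))
          = -(fderiv ℝ (fun p => (g p * w).re) p ((0:ℝ),(1:ℝ))) := by
        rw [fderiv_fun_neg]; simp
      rw [hn]
      linarith
    · intro p hp
      have hcr1 := (hcr p hp).1
      have hn : fderiv ℝ (fun p => -((g p * w).re)) p ((1:ℝ),(0:ℝ))
          = -(fderiv ℝ (fun p => (g p * w).re) p ((1:ℝ),(0:ℝ))) := by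
        rw [fderiv_fun_neg]; simp
      rw [hn, neg_neg]
      linarith
  · -- MemL2D of the first component
    apply memL2D_of_bound (F := fun p => ‖gi p‖) hsm.1.continuousOn
    · exact hf.2
    · intro p hp
      rw [(hgW p hp).1]
      calc |(W p * w).re| ≤ ‖W p * w‖ := abs_re_le_norm' _
        _ = ‖W p‖ * ‖w‖ := norm_mul _ _
        _ = ‖W p‖ := by rw [hw, mul_one]
        _ ≤ ‖gi p‖ + ‖gi (p.1, -p.2)‖ := hWb p
        _ = |‖gi p‖| + |‖gi (p.1, -p.2)‖| := by
            rw [abs_of_nonneg (norm_nonneg _), abs_of_nonneg (norm_nonneg _)]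
  · -- MemL2D of the second component
    apply memL2D_of_bound (F := fun p => ‖gi p‖) hsm.2.continuousOn
    · exact hf.2
    · intro p hp
      have habs : |(-(g p * (w*k)).re)| = |(W p * (w*k)).re| := by
        rw [abs_neg, (hgW p hp).2]
      rw [habs]
      calc |(W p * (w*k)).re| ≤ ‖W p * (w*k)‖ := abs_re_le_norm' _
        _ = ‖W p‖ * (‖w‖ * ‖k‖) := by rw [norm_mul, norm_mul]
        _ = ‖W p‖ := by rw [hw, hk.2]; norm_num
        _ ≤ ‖gi p‖ + ‖gi (p.1, -p.2)‖ := hWb p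
        _ = |‖gi p‖| + |‖gi (p.1, -p.2)‖| := by
            rw [abs_of_nonneg (norm_nonneg _), abs_of_nonneg (norm_nonneg _)]

end Aux

/-- Well-definedness of the section: the components `D₁,…,D₄` of `f ∈ A_i(𝔹⁴)` form
conjugate harmonic pairs `(D₁,D₂)` and `(D₃,D₄)` of finite `L²(D)` norm, so
`S_{k,l}[f] ∈ HL(D)`. -/

theorem section_well_defined (i : ℍ) (hi : Sph2 i)
    (f : ℍ → ℍ) (hf : MemBergB i f) (k l : ℍ) (hkl : OrthPair k l) :
    HLpair (Dc1 f k l) (Dc2 f k l) ∧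
    HLpair (Dc3 f k l) (Dc4 f k l) ∧
    (Smap f k l).mem := by
  obtain ⟨hk, hl, horth⟩ := hkl
  have h1 := pair_hl hi hk hf (1:ℍ) norm_one
  have h2 := pair_hl hi hk hf (-l) (by rw [norm_neg, hl.2])
  have e1 : (fun p : ℝ × ℝ => (f ((p.1:ℍ) + p.2 • k) * (1:ℍ)).re) = Dc1 f k l := by
    funext p; simp [Dc1, Qsl]
  have e2 : (fun p : ℝ × ℝ => -(f ((p.1:ℍ) + p.2 • k) * ((1:ℍ)*k)).re) = Dc2 f k l := by
    funext p; simp [Dc2, Qsl]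
  have e3 : (fun p : ℝ × ℝ => (f ((p.1:ℍ) + p.2 • k) * (-l)).re) = Dc3 f k l := by
    funext p; simp [Dc3, Qsl]
  have e4 : (fun p : ℝ × ℝ => -(f ((p.1:ℍ) + p.2 • k) * ((-l)*k)).re) = Dc4 f k l := by
    funext p; simp [Dc4, Qsl, neg_mul]
  rw [e1, e2] at h1
  rw [e3, e4] at h2
  exact ⟨h1, h2, h1, h2, hk, hl, horth⟩
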